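/- For n > 3, the pair-connected ratio of any non-hamiltonian graph of order n is at most (n-2)/n; that is, if G is non-hamiltonian and k pairs of vertices of G are joined by hamiltonian paths, then k / C(n,2) ≤ (n-2)/n. -/

import Mathlib

/-- The set of unordered pairs of distinct vertices joined by a hamiltonian path. -/
def hamPairs {V : Type*} [DecidableEq V] (G : SimpleGraph V) : Set (Sym2 V) :=
  {e | ∃ u v : V, u ≠ v ∧ e = s(u, v) ∧ ∃ p : G.Walk u v, p.IsHamiltonian}

open SimpleGraph in
/-- A hamiltonian path whose endpoints are adjacent yields a hamiltonian cycle. -/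
lemma ham_of_adj {V : Type*} [Fintype V] [DecidableEq V] {G : SimpleGraph V} {u v : V}
    (hcard : 3 < Fintype.card V) (h : G.Adj v u) (p : G.Walk u v) (hp : p.IsHamiltonian) :
    G.IsHamiltonian := by
  intro _
  have hpath : p.IsPath := hp.isPath
  have hlen : p.length = Fintype.card V - 1 := hp.length_eq
  have hne : s(v, u) ∉ p.edges := by
    intro hmem
    cases p with
    | nil => simp at hlen; omega
    | @cons _ x _ h' q =>
      simp only [Walk.edges_cons, List.mem_cons] at hmem
      rcases hmem with heq | hmem
      · have hx : x = v := by
          rw [Sym2.eq_iff] at heq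
          rcases heq with ⟨hvu, _⟩ | ⟨hvx, _⟩
          · exact absurd hvu.symm h.ne'
          · exact hvx.symm
        subst hx
        have : q = Walk.nil := (Walk.isPath_iff_eq_nil (p := q)).1
          ((Walk.cons_isPath_iff h' q).1 hpath).1
        subst this
        simp only [Walk.length_cons, Walk.length_nil] at hlen
        omega
      · have hu : u ∈ q.support := q.snd_mem_support_of_mem_edges hmem
        exact ((Walk.cons_isPath_iff h' q).1 hpath).2 hu
  have hcyc : (Walk.cons h p).IsCycle := (Walk.cons_isCycle_iff p h).2 ⟨hpath, hne⟩
  refine ⟨v, Walk.cons h p, hcyc, ?_⟩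
  intro a
  simp only [Walk.tail_cons, Walk.support_copy]
  exact (congrArg (List.count a) (Walk.support_copy _ _ _)).trans (hp a)

theorem stmt_5 {V : Type*} [Fintype V] [DecidableEq V] (G : SimpleGraph V)
    (hcard : 3 < Fintype.card V) (hnonham : ¬ G.IsHamiltonian)
    (k : ℕ) (hk : k = (hamPairs G).ncard) :
    (k : ℚ) / ((Fintype.card V).choose 2) ≤ ((Fintype.card V : ℚ) - 2) / (Fintype.card V) := by
  classical
  set n := Fintype.card V with hn
  -- Step 1: `hamPairs G` is disjoint from the edge set of `G`.
  have hdisj : Disjoint (hamPairs G) G.edgeSet := by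
    rw [Set.disjoint_left]
    rintro e ⟨u, v, huv, rfl, p, hp⟩ hedge
    rw [SimpleGraph.mem_edgeSet] at hedge
    exact hnonham (ham_of_adj hcard hedge.symm p hp)
  -- Step 2: their union lies in the edge set of the complete graph.
  have hsub : hamPairs G ∪ G.edgeSet ⊆ (⊤ : SimpleGraph V).edgeSet := by
    rintro e (⟨u, v, huv, rfl, -⟩ | he)
    · rw [SimpleGraph.mem_edgeSet]; exact huv
    · exact (SimpleGraph.edgeSet_mono le_top) he
  have htopcard : ((⊤ : SimpleGraph V).edgeSet).ncard = n.choose 2 := by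
    rw [Set.ncard_eq_toFinset_card']
    exact SimpleGraph.card_edgeFinset_top_eq_card_choose_two
  have hsum : (hamPairs G).ncard + G.edgeSet.ncard ≤ n.choose 2 := by
    rw [← Set.ncard_union_eq hdisj (Set.toFinite _) (Set.toFinite _), ← htopcard]
    exact Set.ncard_le_ncard hsub (Set.toFinite _)
  -- Step 3: bound `k`.
  have hkey : k + (n - 1) ≤ n.choose 2 := by
    rcases Set.eq_empty_or_nonempty (hamPairs G) with hemp | ⟨e, he⟩
    · have hk0 : k = 0 := by rw [hk, hemp, Set.ncard_empty]
      have h1 : n.choose 1 ≤ n.choose 2 :=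
        Nat.choose_le_succ_of_lt_half_left (by omega)
      rw [Nat.choose_one_right] at h1
      omega
    · obtain ⟨u, v, huv, rfl, p, hp⟩ := he
      have hedges : n - 1 ≤ G.edgeSet.ncard := by
        have htrail : p.IsTrail := hp.isPath.isTrail
        have := htrail.length_le_card_edgeFinset
        rw [hp.length_eq] at this
        rwa [Set.ncard_eq_toFinset_card']
      omega
  -- Step 4: arithmetic.
  have hchoose : ((n.choose 2 : ℕ) : ℚ) = (n : ℚ) * ((n : ℚ) - 1) / 2 :=
    Nat.cast_choose_two (K := ℚ) n
  have hn4 : (4 : ℕ) ≤ n := hcard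
  have hnq : (4 : ℚ) ≤ (n : ℚ) := by exact_mod_cast hn4
  have hkq : (k : ℚ) + ((n : ℚ) - 1) ≤ (n : ℚ) * ((n : ℚ) - 1) / 2 := by
    have : ((k + (n - 1) : ℕ) : ℚ) ≤ ((n.choose 2 : ℕ) : ℚ) := by exact_mod_cast hkey
    rw [hchoose] at this
    have hcast : ((n - 1 : ℕ) : ℚ) = (n : ℚ) - 1 := by
      have : (1 : ℕ) ≤ n := by omega
      push_cast [this]; ring
    push_cast at this ⊢
    rw [hcast] at this
    linarith
  have hCpos : (0 : ℚ) < ((n.choose 2 : ℕ) : ℚ) := by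
    rw [hchoose]; nlinarith
  have hnpos : (0 : ℚ) < (n : ℚ) := by linarith
  rw [div_le_div_iff₀ hCpos hnpos, hchoose]
  nlinarith [hkq]
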